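/- arXiv:2505.08140 — 2 statements merged into one kernel-verified Lean document; each statement's English description precedes it below -/
import Mathlib

section
/- For every function a : ℕ → ℕ with 1 ≤ a(n) for all n and a(n) = o(n), and for every n with a(n) ≤ n, there exists a (⌈log₂ a(n)⌉, n − a(n))-BAPO solving Majority on all inputs of length n. -/
open Finset Filter Asymptotics

/-- An `(a, b)`-BAPO (bounded attention prefix oracle): a prefix oracle `f` outputting
`a` bits, a binary attention function `g`, and a suffix oracle `h` that receives the
prefix-oracle output, an attended set of at most `b` (token, 1-based index) pairs from
the prefix, the suffix, and the split index. -/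
structure BAPO (Sigma : Type) (Out : Type) (a b : ℕ) where
  f : List Sigma → (Fin a → Bool)
  g : List Sigma → ℕ → Sigma → ℕ → Bool
  h : (Fin a → Bool) → Finset (Sigma × ℕ) → List Sigma → ℕ → Out

namespace BAPO

variable {Sigma Out : Type} {a b : ℕ}

/-- The set `𝔾 = {(xᵢ, i) : 1 ≤ i ≤ k, g(suffix, k, xᵢ, i) = 1}` of attended
candidates for a given prefix and suffix. -/
noncomputable def cands (M : BAPO Sigma Out a b) (pre suf : List Sigma) :
    Finset (Sigma × ℕ) :=
  letI := Classical.decEq Sigma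
  (Finset.univ.filter fun i : Fin pre.length =>
      M.g suf pre.length (pre.get i) ((i : ℕ) + 1) = true).image
    fun i => (pre.get i, (i : ℕ) + 1)

/-- The BAPO outputs `y` on input `x`: for every split index `k < |x|` and every
attended set `G ⊆ 𝔾` with `|G| = min b |𝔾|`, the suffix oracle outputs `y`. -/
def SolvesOn (M : BAPO Sigma Out a b) (x : List Sigma) (y : Out) : Prop :=
  ∀ k, k < x.length →
    ∀ G : Finset (Sigma × ℕ), G ⊆ M.cands (x.take k) (x.drop k) →
      G.card = min b (M.cands (x.take k) (x.drop k)).card →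
      M.h (M.f (x.take k)) G (x.drop k) k = y

/-- The BAPO outputs a *correct* answer (one satisfying `good`) on input `x`:
for every split index `k < |x|` and every attended set `G ⊆ 𝔾` with
`|G| = min b |𝔾|`, the suffix oracle's output satisfies `good`. -/
def SolvesOnP (M : BAPO Sigma Out a b) (x : List Sigma) (good : Out → Prop) : Prop :=
  ∀ k, k < x.length →
    ∀ G : Finset (Sigma × ℕ), G ⊆ M.cands (x.take k) (x.drop k) →
      G.card = min b (M.cands (x.take k) (x.drop k)).card →
      good (M.h (M.f (x.take k)) G (x.drop k) k)

end BAPO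

lemma count_true_sum (l : List Bool) :
    (∑ i : Fin l.length, if l.get i = true then 1 else 0) = l.count true := by
  induction l with
  | nil => simp
  | cons hd tl ih =>
    have h : (∑ i : Fin (tl.length + 1), if (hd :: tl).get i = true then 1 else 0)
        = List.count true (hd :: tl) := by
      rw [Fin.sum_univ_succ]
      have h2 : (∑ i : Fin tl.length, if (hd :: tl).get i.succ = true then 1 else 0)
          = List.count true tl := ih
      rw [h2, List.count_cons]
      cases hd <;> simp <;> omega
    exact h

lemma count_false_add_count_true (l : List Bool) :
    l.count false + l.count true = l.length := by
  induction l with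
  | nil => simp
  | cons hd tl ih => cases hd <;> simp [List.count_cons] <;> omega

lemma cands_card_count {Out : Type} {a b : ℕ} (M : BAPO Bool Out a b)
    (hMg : M.g = fun _ _ tok _ => tok) (pre suf : List Bool) :
    (M.cands pre suf).card = pre.count true := by
  classical
  rw [BAPO.cands, hMg]
  rw [Subsingleton.elim (Classical.decEq Bool) instDecidableEqBool]
  rw [Finset.card_image_of_injective]
  · rw [Finset.card_filter]
    convert count_true_sum pre using 2
  · intro i j hij
    have h2 := congrArg Prod.snd hij
    simp only at h2
    exact Fin.ext (by omega)

/-- **Majority prefix/attention trade-off.** For every function `a : ℕ → ℕ` with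
`1 ≤ a(n)` for all `n` and `a(n) = o(n)`, and for every `n` with `a(n) ≤ n`, there
exists a `(⌈log₂ a(n)⌉, n - a(n))`-BAPO solving `Majority` on all inputs of
length `n`. -/
theorem majority_tradeoff (a : ℕ → ℕ) (ha1 : ∀ n, 1 ≤ a n)
    (hao : (fun n : ℕ => (a n : ℝ)) =o[atTop] fun n : ℕ => (n : ℝ))
    (n : ℕ) (han : a n ≤ n) :
    ∃ M : BAPO Bool Bool (Nat.clog 2 (a n)) (n - a n),
      ∀ x : List Bool, x.length = n →
        M.SolvesOn x (decide (x.count false < x.count true)) := by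
  classical
  set m := Nat.clog 2 (a n) with hm
  set b := n - a n with hb
  let E : (Fin m → Bool) ≃ Fin (2 ^ m) :=
    (Equiv.arrowCongr (Equiv.refl _) finTwoEquiv.symm).trans finFunctionFinEquiv
  have h2m : 0 < 2 ^ m := Nat.pow_pos (by norm_num)
  let enc : ℕ → (Fin m → Bool) := fun e => E.symm ⟨e % 2 ^ m, Nat.mod_lt _ h2m⟩
  let dec : (Fin m → Bool) → ℕ := fun v => (E v : ℕ)
  have hdec : ∀ e, e < 2 ^ m → dec (enc e) = e := by
    intro e he
    simp only [dec, enc, Equiv.apply_symm_apply]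
    exact Nat.mod_eq_of_lt he
  refine ⟨{ f := fun pre => enc (pre.count true - b)
            g := fun _ _ tok _ => tok
            h := fun bits G suf k =>
              decide (k + suf.length <
                2 * ((if G.card < b then G.card else dec bits + b) + suf.count true)) },
         ?_⟩
  intro x hx k hk G _hG hcard
  set pre := x.take k with hpre
  set suf := x.drop k with hsuf
  have hklen : pre.length = k := by
    simp only [hpre, List.length_take]
    omega
  have hslen : suf.length = n - k := by simp [hsuf, hx]
  rw [cands_card_count _ rfl] at hcard
  set t := pre.count true with ht
  set s := suf.count true with hs
  have htk : t ≤ pre.length := List.count_le_length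
  have hts : x.count true = t + s := by
    rw [ht, hs, hpre, hsuf, ← List.count_append, List.take_append_drop]
  have hfs : x.count false + x.count true = n := by
    rw [← hx]; exact count_false_add_count_true x
  show decide (k + suf.length <
      2 * ((if G.card < b then G.card else dec (enc (t - b)) + b) + s)) = _
  have hc : (if G.card < b then G.card else dec (enc (t - b)) + b) = t := by
    by_cases hlt : t < b
    · have hGt : G.card = t := by omega
      simp [hGt, hlt]
    · push_neg at hlt
      have hGb : G.card = b := by omega
      have he : t - b < 2 ^ m := by
        have h1 : a n ≤ 2 ^ m := Nat.le_pow_clog (by norm_num) _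
        have h2 := ha1 n
        omega
      rw [hdec _ he]
      simp only [hGb, lt_irrefl, if_false]
      omega
  rw [hc, hslen]
  have hkn : k + (n - k) = n := by omega
  rw [hkn]
  have hctn : t + s ≤ n := by omega
  simp only [decide_eq_decide]
  omega
end

section
/- Fix ε ∈ (0,1) and functions a, b : ℕ → ℕ with a(n) = o(log n) and b(n) = O(n^{1−ε}). Then for all sufficiently large n there is no (a(n), b(n))-BAPO that solves Median on all inputs of length n, and no (a(n), b(n))-BAPO that solves Mode on all inputs of length n; in particular, on {0,1}-valued inputs both the median and the mode equal 1 exactly when the input has a strict majority of ones. -/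
open Finset Filter Asymptotics

lemma card_filter_univ_eq_countP {m : ℕ} (p : Fin m → Prop) [DecidablePred p] :
    ((Finset.univ : Finset (Fin m)).filter p).card = (List.finRange m).countP (fun x => decide (p x)) := by
  rw [Fin.univ_def]
  change Multiset.card (Multiset.filter p (↑(List.finRange m))) = _
  rw [Multiset.filter_coe, Multiset.coe_card, List.countP_eq_length_filter]

lemma count_ofFn {m : ℕ} (w : Fin m → ℤ) (y : ℤ) :
    (List.ofFn w).count y = ((Finset.univ : Finset (Fin m)).filter (fun i => w i = y)).card := by
  classical
  rw [List.ofFn_eq_map, List.count_eq_countP, List.countP_map, card_filter_univ_eq_countP]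
  congr 1

lemma count_zero_add_count_one (l : List ℤ) (h : ∀ t ∈ l, t = 0 ∨ t = 1) :
    l.count 0 + l.count 1 = l.length := by
  induction l with
  | nil => simp
  | cons x xs ih =>
    have hx := h x (by simp)
    have ih' := ih (fun t ht => h t (by simp [ht]))
    rcases hx with rfl | rfl <;> simp [List.count_cons, ih'] <;> omega

lemma cands_ofFn {Out : Type} {a b k : ℕ} (M : BAPO ℤ Out a b) (w : Fin k → ℤ) (suf : List ℤ) :
    M.cands (List.ofFn w) suf =
      (Finset.univ.filter fun q : Fin k => M.g suf k (w q) ((q : ℕ) + 1) = true).image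
        (fun q => (w q, (q : ℕ) + 1)) := by
  classical
  unfold BAPO.cands
  ext z
  simp only [Finset.mem_image, Finset.mem_filter, Finset.mem_univ, true_and]
  constructor
  · rintro ⟨i, hg, rfl⟩
    refine ⟨Fin.cast (List.length_ofFn : (List.ofFn w).length = k) i, ?_, ?_⟩
    · rw [← List.get_ofFn w i] at *
      simpa [List.length_ofFn] using hg
    · simp [List.get_ofFn]; rfl
  · rintro ⟨q, hg, rfl⟩
    refine ⟨Fin.cast (List.length_ofFn : (List.ofFn w).length = k).symm q, ?_, ?_⟩
    · simpa [List.get_ofFn, List.length_ofFn] using hg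
    · simp [List.get_ofFn]

lemma bapo_maj_core (a b n : ℕ) (hsize : 100 * 2^a * 2^a * (b+1) ≤ n)
    (F : List ℤ → ℤ)
    (hF : ∀ x : List ℤ, (∀ t ∈ x, t = 0 ∨ t = 1) → F x = if x.count 0 < x.count 1 then 1 else 0) :
    ¬ ∃ M : BAPO ℤ ℤ a b, ∀ x : List ℤ, x.length = n → M.SolvesOn x (F x) := by
  classical
  rintro ⟨M, sol⟩
  set A := 2^a with hAdef
  have hA1 : 1 ≤ A := Nat.one_le_two_pow
  set k := n / 2 with hk
  set s := n - k with hs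
  set θ := A*b + A + b + 1 with hθ
  set C := A*b + A with hC
  have hn100 : 100 ≤ n := by
    have : 100 * 1 * 1 * 1 ≤ 100 * A * A * (b+1) := by
      apply Nat.mul_le_mul
      apply Nat.mul_le_mul
      apply Nat.mul_le_mul le_rfl hA1
      exact hA1
      omega
    omega
  -- master arithmetic fact
  have hok : C + θ * A + A + A*b + C + A + 1 ≤ k := by
    have h2k : n ≤ 2 * k + 1 := by omega
    have h3 : A ≤ A*A := Nat.le_mul_of_pos_left A hA1
    have h1 : A*b ≤ A*A*b := Nat.mul_le_mul_right b h3
    have h2 : b ≤ A*A*b := Nat.le_mul_of_pos_left b (by positivity)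
    have h4 : 100 * (A*A*b) + 100 * (A*A) ≤ n := by nlinarith
    have h5 : θ * A = A*(A*b) + A*A + b*A + A := by rw [hθ]; ring
    have h6 : A*(A*b) = A*A*b := by ring
    have h7 : b*A = A*b := by ring
    rw [hC, h5, h6, h7]
    omega
  have hks : k ≤ s := by omega
  -- the suffix with t ones
  set suf : ℕ → List ℤ := fun t => List.replicate t 1 ++ List.replicate (s - t) 0 with hsuf
  -- attended positions
  set U : ℕ → Finset (Fin k) := fun t => Finset.univ.filter
      (fun q => M.g (suf t) k 0 ((q:ℕ)+1) = true ∨ M.g (suf t) k 1 ((q:ℕ)+1) = true) with hU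
  set T : Finset ℕ := (Finset.range A).image (fun j => k - C - j) with hT
  have hTcard : T.card ≤ A := le_trans (Finset.card_image_le) (by simp)
  set lightT : Finset ℕ := T.filter (fun t => (U t).card < θ) with hlightT
  set lightU : Finset (Fin k) := lightT.biUnion U with hlightU
  have hlightU_card : lightU.card ≤ θ * A := by
    calc lightU.card ≤ ∑ t ∈ lightT, (U t).card := Finset.card_biUnion_le
      _ ≤ lightT.card • θ := Finset.sum_le_card_nsmul _ _ _
          (fun t ht => le_of_lt (Finset.mem_filter.mp ht).2)
      _ ≤ A * θ := by
          have h1 : lightT.card ≤ A := le_trans (Finset.card_filter_le _ _) hTcard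
          simpa [smul_eq_mul] using Nat.mul_le_mul_right θ h1
      _ = θ * A := Nat.mul_comm _ _
  -- choose the block positions
  have hbs_exists : A ≤ (Finset.univ \ lightU).card := by
    have h1 : (Finset.univ \ lightU).card = k - lightU.card := by
      rw [Finset.card_sdiff]
      simp
    omega
  obtain ⟨bs, hbs_sub, hbs_card⟩ := Finset.exists_subset_card_eq hbs_exists
  set e := bs.orderIsoOfFin hbs_card with he
  -- Hall: disjoint representatives for heavy suffixes
  set heavyT : Finset ℕ := T.filter (fun t => θ ≤ (U t).card) with hheavyT
  set ι : Finset (ℕ × ℕ) := heavyT ×ˢ Finset.range b with hι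
  have hιcard : Fintype.card {x // x ∈ ι} ≤ A * b := by
    rw [Fintype.card_coe, hι, Finset.card_product, Finset.card_range]
    exact Nat.mul_le_mul_right b (le_trans (Finset.card_filter_le _ _) hTcard)
  have hall : ∀ S : Finset {x // x ∈ ι}, S.card ≤ (S.biUnion (fun x => U x.1.1 \ bs)).card := by
    intro S
    rcases S.eq_empty_or_nonempty with rfl | ⟨x, hx⟩
    · simp
    · have hxh : x.1.1 ∈ heavyT := (Finset.mem_product.mp x.2).1
      have hxU : θ ≤ (U x.1.1).card := (Finset.mem_filter.mp hxh).2
      have h1 : S.card ≤ A * b := le_trans (Finset.card_le_univ S) (by simpa using hιcard)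
      have h2 : θ - A ≤ (U x.1.1 \ bs).card := by
        have h4 := Finset.le_card_sdiff bs (U x.1.1)
        have h5 : (U x.1.1).card - bs.card ≤ (U x.1.1 \ bs).card := h4
        omega
      have h3 : (U x.1.1 \ bs) ⊆ S.biUnion (fun x => U x.1.1 \ bs) :=
        Finset.subset_biUnion_of_mem (fun x : {y // y ∈ ι} => U x.1.1 \ bs) hx
      have h6 := Finset.card_le_card h3
      omega
  obtain ⟨f, hf_inj, hf_mem⟩ := (Finset.all_card_le_biUnion_card_iff_exists_injective _).mp hall
  set reps : Finset (Fin k) := Finset.univ.image f with hreps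
  have hreps_card : reps.card ≤ A * b := le_trans Finset.card_image_le (by simpa using hιcard)
  have hreps_bs : ∀ q ∈ reps, q ∉ bs := by
    intro q hq
    obtain ⟨x, _, rfl⟩ := Finset.mem_image.mp hq
    exact (Finset.mem_sdiff.mp (hf_mem x)).2
  -- values at representative positions
  set val : Fin k → ℤ := fun q =>
    if h : ∃ x, f x = q then (if M.g (suf h.choose.1.1) k 0 ((q:ℕ)+1) = true then 0 else 1)
    else 0 with hval
  have hval_eq : ∀ x : {y // y ∈ ι},
      val (f x) = if M.g (suf x.1.1) k 0 (((f x):ℕ)+1) = true then 0 else 1 := by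
    intro x
    have hex : ∃ y, f y = f x := ⟨x, rfl⟩
    have hch : hex.choose = x := hf_inj hex.choose_spec
    rw [hval]
    dsimp only
    rw [dif_pos hex, hch]
  have hval_att : ∀ x : {y // y ∈ ι}, M.g (suf x.1.1) k (val (f x)) (((f x):ℕ)+1) = true := by
    intro x
    have hUx : f x ∈ U x.1.1 := (Finset.mem_sdiff.mp (hf_mem x)).1
    rw [hU] at hUx
    have hUx' := (Finset.mem_filter.mp hUx).2
    rw [hval_eq x]
    by_cases h0 : M.g (suf x.1.1) k 0 (((f x):ℕ)+1) = true
    · rw [if_pos h0]; exact h0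
    · rw [if_neg h0]
      rcases hUx' with h | h
      · exact absurd h h0
      · exact h
  have hval01 : ∀ q, val q = 0 ∨ val q = 1 := by
    intro q
    rw [hval]
    dsimp only
    split
    · split
      · exact Or.inl rfl
      · exact Or.inr rfl
    · exact Or.inl rfl
  -- padding
  set onesR := (reps.filter (fun q => val q = 1)).card with honesR
  have honesR_le : onesR ≤ A * b := le_trans (Finset.card_filter_le _ _) hreps_card
  have hpad_exists : C - onesR ≤ (Finset.univ \ (bs ∪ reps)).card := by
    have h1 : (bs ∪ reps).card ≤ A + A * b := by
      have := Finset.card_union_le bs reps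
      omega
    have h2 : (Finset.univ \ (bs ∪ reps)).card = k - (bs ∪ reps).card := by
      rw [Finset.card_sdiff]
      simp
    omega
  obtain ⟨P, hP_sub, hP_card⟩ := Finset.exists_subset_card_eq hpad_exists
  have hP_out : ∀ q ∈ P, q ∉ bs ∧ q ∉ reps := by
    intro q hq
    have h1 := (Finset.mem_sdiff.mp (hP_sub hq)).2
    exact ⟨fun hb => h1 (Finset.mem_union_left _ hb), fun hr => h1 (Finset.mem_union_right _ hr)⟩
  -- block index
  set idx : Fin k → ℕ := fun q => if h : q ∈ bs then ((e.symm ⟨q, h⟩ : Fin A) : ℕ) else 0 with hidx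
  -- the prefix family
  set w : ℕ → Fin k → ℤ := fun j q =>
    if q ∈ bs then (if idx q < j then 1 else 0)
    else if q ∈ reps then val q
    else if q ∈ P then 1 else 0 with hw
  have hw01 : ∀ j q, w j q = 0 ∨ w j q = 1 := by
    intro j q
    rw [hw]
    dsimp only
    split
    · split
      · exact Or.inr rfl
      · exact Or.inl rfl
    · split
      · exact hval01 q
      · split
        · exact Or.inr rfl
        · exact Or.inl rfl
  have hw_off_bs : ∀ j j' (q : Fin k), q ∉ bs → w j q = w j' q := by
    intro j j' q hq
    rw [hw]
    dsimp only
    rw [if_neg hq, if_neg hq]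
  have hw_reps : ∀ j (x : {y // y ∈ ι}), w j (f x) = val (f x) := by
    intro j x
    have h1 : f x ∈ reps := Finset.mem_image.mpr ⟨x, Finset.mem_univ x, rfl⟩
    have h2 : f x ∉ bs := hreps_bs _ h1
    rw [hw]
    dsimp only
    rw [if_neg h2, if_pos h1]
  -- counting ones in the prefixes
  have hbs_filter_card : ∀ j, j ≤ A → (bs.filter (fun q => idx q < j)).card = j := by
    intro j hj
    have himg : bs.filter (fun q => idx q < j)
        = (Finset.univ.filter (fun r : Fin A => (r:ℕ) < j)).image (fun r => (e r : Fin k)) := by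
      ext q
      simp only [Finset.mem_filter, Finset.mem_image, Finset.mem_univ, true_and]
      constructor
      · rintro ⟨hqbs, hlt⟩
        refine ⟨e.symm ⟨q, hqbs⟩, ?_, ?_⟩
        · rw [hidx] at hlt
          dsimp only at hlt
          rwa [dif_pos hqbs] at hlt
        · simp
      · rintro ⟨r, hr, rfl⟩
        refine ⟨(e r).2, ?_⟩
        rw [hidx]
        dsimp only
        rw [dif_pos (e r).2]
        simpa using hr
    rw [himg, Finset.card_image_of_injective _ (fun r r' hrr => e.injective (Subtype.ext hrr))]
    have hcast : (Finset.univ.filter (fun r : Fin A => (r:ℕ) < j))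
        = (Finset.univ : Finset (Fin j)).map ⟨Fin.castLE hj, Fin.castLE_injective hj⟩ := by
      ext r
      simp only [Finset.mem_filter, Finset.mem_univ, true_and, Finset.mem_map,
        Function.Embedding.coeFn_mk]
      constructor
      · intro hr
        exact ⟨⟨(r:ℕ), hr⟩, by ext; simp⟩
      · rintro ⟨r', _, rfl⟩
        exact r'.2
    rw [hcast, Finset.card_map]
    simp
  have hcount1 : ∀ j, j ≤ A → (List.ofFn (w j)).count 1 = C + j := by
    intro j hj
    rw [count_ofFn]
    have hsplit : Finset.univ.filter (fun q : Fin k => w j q = 1)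
        = (bs.filter (fun q => idx q < j)) ∪ ((reps.filter (fun q => val q = 1)) ∪ P) := by
      ext q
      simp only [Finset.mem_filter, Finset.mem_univ, true_and, Finset.mem_union]
      constructor
      · intro hq
        rw [hw] at hq
        dsimp only at hq
        by_cases h1 : q ∈ bs
        · rw [if_pos h1] at hq
          left
          refine ⟨h1, ?_⟩
          by_contra hlt
          rw [if_neg hlt] at hq
          exact absurd hq (by norm_num)
        · rw [if_neg h1] at hq
          by_cases h2 : q ∈ reps
          · rw [if_pos h2] at hq
            exact Or.inr (Or.inl ⟨h2, hq⟩)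
          · rw [if_neg h2] at hq
            by_cases h3 : q ∈ P
            · exact Or.inr (Or.inr h3)
            · rw [if_neg h3] at hq
              exact absurd hq (by norm_num)
      · intro hq
        rw [hw]
        dsimp only
        rcases hq with ⟨h1, h2⟩ | ⟨h1, h2⟩ | h1
        · rw [if_pos h1, if_pos h2]
        · have hnbs := hreps_bs q h1
          rw [if_neg hnbs, if_pos h1]
          exact h2
        · obtain ⟨hnbs, hnreps⟩ := hP_out q h1
          rw [if_neg hnbs, if_neg hnreps, if_pos h1]
    have hd2 : Disjoint (reps.filter (fun q => val q = 1)) P := by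
      rw [Finset.disjoint_left]
      intro q hq hq'
      exact (hP_out q hq').2 (Finset.mem_filter.mp hq).1
    have hd1 : Disjoint (bs.filter (fun q => idx q < j))
        ((reps.filter (fun q => val q = 1)) ∪ P) := by
      rw [Finset.disjoint_left]
      intro q hq hq'
      have hqbs : q ∈ bs := (Finset.mem_filter.mp hq).1
      rcases Finset.mem_union.mp hq' with h | h
      · exact hreps_bs q (Finset.mem_filter.mp h).1 hqbs
      · exact (hP_out q h).1 hqbs
    rw [hsplit, Finset.card_union_of_disjoint hd1, Finset.card_union_of_disjoint hd2,
      hbs_filter_card j hj, hP_card, ← honesR]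
    omega
  -- pigeonhole on the prefix oracle
  have hcardlt : (Finset.univ : Finset (Fin a → Bool)).card < (Finset.range (A+1)).card := by
    rw [Finset.card_univ, Fintype.card_fun, Finset.card_range]
    simp [hAdef]
  obtain ⟨j1, hj1, j2, hj2, hne, heqf⟩ :=
    Finset.exists_ne_map_eq_of_card_lt_of_maps_to hcardlt
      (f := fun j => M.f (List.ofFn (w j))) (fun _ _ => Finset.mem_univ _)
  obtain ⟨j, j', hjj', hj'A, hfeq⟩ : ∃ j j', j < j' ∧ j' ≤ A ∧
      M.f (List.ofFn (w j)) = M.f (List.ofFn (w j')) := by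
    have hr1 := Finset.mem_range.mp hj1
    have hr2 := Finset.mem_range.mp hj2
    rcases Nat.lt_or_ge j1 j2 with h | h
    · exact ⟨j1, j2, h, by omega, heqf⟩
    · exact ⟨j2, j1, by omega, by omega, heqf.symm⟩
    -- the separating suffix
  set t0 := k - C - j with ht0def
  have hjA : j < A := lt_of_lt_of_le hjj' hj'A
  have ht0T : t0 ∈ T := by
    rw [hT]
    exact Finset.mem_image.mpr ⟨j, Finset.mem_range.mpr hjA, rfl⟩
  have ht0k : t0 + C + j = k := by omega
  have ht0s : t0 ≤ s := by omega
  have hsuflen : (suf t0).length = s := by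
    rw [hsuf]
    simp only [List.length_append, List.length_replicate]
    omega
  have hsufc1 : (suf t0).count 1 = t0 := by
    rw [hsuf]
    simp [List.count_append, List.count_replicate]
  have hsuf01 : ∀ v ∈ suf t0, v = 0 ∨ v = 1 := by
    rw [hsuf]
    intro v hv
    rcases List.mem_append.mp hv with h | h
    · exact Or.inr (List.eq_of_mem_replicate h)
    · exact Or.inl (List.eq_of_mem_replicate h)
  -- the two inputs
  have hkn : k < n := by omega
  have hXlen : ∀ i : ℕ, (List.ofFn (w i) ++ suf t0).length = n := by
    intro i
    rw [List.length_append, List.length_ofFn, hsuflen]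
    omega
  have hXtake : ∀ i : ℕ, (List.ofFn (w i) ++ suf t0).take k = List.ofFn (w i) :=
    fun i => List.take_left' List.length_ofFn
  have hXdrop : ∀ i : ℕ, (List.ofFn (w i) ++ suf t0).drop k = suf t0 :=
    fun i => List.drop_left' List.length_ofFn
  have hX01 : ∀ i : ℕ, ∀ v ∈ (List.ofFn (w i) ++ suf t0), v = 0 ∨ v = 1 := by
    intro i v hv
    rcases List.mem_append.mp hv with h | h
    · obtain ⟨q, rfl⟩ := List.mem_ofFn.mp h
      exact hw01 i q
    · exact hsuf01 v h
  have hXc1 : ∀ i, i ≤ A → (List.ofFn (w i) ++ suf t0).count 1 = C + i + t0 := by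
    intro i hi
    rw [List.count_append, hcount1 i hi, hsufc1]
  have hXc0 : ∀ i, i ≤ A → (List.ofFn (w i) ++ suf t0).count 0 = n - (C + i + t0) := by
    intro i hi
    have hz := count_zero_add_count_one _ (hX01 i)
    rw [hXc1 i hi, hXlen i] at hz
    omega
  have hFj : F (List.ofFn (w j) ++ suf t0) = 0 := by
    rw [hF _ (hX01 j), hXc1 j (le_of_lt hjA), hXc0 j (le_of_lt hjA), if_neg (by omega)]
  have hFj' : F (List.ofFn (w j') ++ suf t0) = 1 := by
    rw [hF _ (hX01 j'), hXc1 j' hj'A, hXc0 j' hj'A, if_pos (by omega)]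
  -- explicit candidate sets
  set CF : ℕ → Finset (ℤ × ℕ) := fun i =>
    (Finset.univ.filter fun q : Fin k => M.g (suf t0) k (w i q) ((q:ℕ)+1) = true).image
      (fun q => (w i q, (q:ℕ)+1)) with hCF
  have hcands : ∀ i, M.cands (List.ofFn (w i)) (suf t0) = CF i :=
    fun i => cands_ofFn M (w i) (suf t0)
  -- a common attended set
  obtain ⟨G, hG1, hG2, hGc1, hGc2⟩ : ∃ G : Finset (ℤ × ℕ), G ⊆ CF j ∧ G ⊆ CF j' ∧
      G.card = min b (CF j).card ∧ G.card = min b (CF j').card := by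
    by_cases hheavy : θ ≤ (U t0).card
    · -- heavy case: use the Hall representatives for t0
      have ht0h : t0 ∈ heavyT := by
        rw [hheavyT]
        exact Finset.mem_filter.mpr ⟨ht0T, hheavy⟩
      set Xf : Finset {y // y ∈ ι} := Finset.univ.filter (fun x => x.1.1 = t0) with hXf
      set G := Xf.image (fun x => (val (f x), ((f x) : ℕ) + 1)) with hG
      have hGsub : ∀ i : ℕ, G ⊆ CF i := by
        intro i z hz
        obtain ⟨x, hx, rfl⟩ := Finset.mem_image.mp hz
        have hxt : x.1.1 = t0 := (Finset.mem_filter.mp hx).2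
        rw [hCF]
        dsimp only
        apply Finset.mem_image.mpr
        refine ⟨f x, Finset.mem_filter.mpr ⟨Finset.mem_univ _, ?_⟩, ?_⟩
        · rw [hw_reps i x]
          have hatt := hval_att x
          rwa [hxt] at hatt
        · rw [hw_reps i x]
      have hGcard : G.card = b := by
        rw [hG, Finset.card_image_of_injective _ ?hinj]
        case hinj =>
          intro x y hxy
          have h2 := (Prod.mk.injEq _ _ _ _ ▸ hxy).2
          have h3 : ((f x) : ℕ) = ((f y) : ℕ) := by omega
          exact hf_inj (Fin.val_injective h3)
        rw [← Finset.card_range b]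
        refine Finset.card_bij' (fun x _ => x.1.2)
          (fun r hr => ⟨(t0, r), Finset.mem_product.mpr ⟨ht0h, hr⟩⟩) ?_ ?_ ?_ ?_
        · intro x hx
          exact (Finset.mem_product.mp x.2).2
        · intro r hr
          exact Finset.mem_filter.mpr ⟨Finset.mem_univ _, rfl⟩
        · intro x hx
          apply Subtype.ext
          apply Prod.ext
          · exact ((Finset.mem_filter.mp hx).2).symm
          · rfl
        · intro r hr
          rfl
      have hble1 : b ≤ (CF j).card := hGcard ▸ Finset.card_le_card (hGsub j)
      have hble2 : b ≤ (CF j').card := hGcard ▸ Finset.card_le_card (hGsub j')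
      exact ⟨G, hGsub j, hGsub j', by rw [hGcard, min_eq_left hble1],
        by rw [hGcard, min_eq_left hble2]⟩
    · -- light case: the candidate sets coincide
      have ht0l : t0 ∈ lightT := by
        rw [hlightT]
        exact Finset.mem_filter.mpr ⟨ht0T, by omega⟩
      have hUsub : U t0 ⊆ lightU := by
        rw [hlightU]
        exact Finset.subset_biUnion_of_mem U ht0l
      have hbsU : ∀ q ∈ bs, q ∉ U t0 := by
        intro q hq hqU
        exact (Finset.mem_sdiff.mp (hbs_sub hq)).2 (hUsub hqU)
      have hkey : ∀ i1 i2 : ℕ, CF i1 ⊆ CF i2 := by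
        intro i1 i2 z hz
        rw [hCF] at hz ⊢
        dsimp only at hz ⊢
        obtain ⟨q, hq, rfl⟩ := Finset.mem_image.mp hz
        have hg := (Finset.mem_filter.mp hq).2
        by_cases hqbs : q ∈ bs
        · exfalso
          apply hbsU q hqbs
          rw [hU]
          dsimp only
          refine Finset.mem_filter.mpr ⟨Finset.mem_univ _, ?_⟩
          rcases hw01 i1 q with h | h
          · left; rwa [h] at hg
          · right; rwa [h] at hg
        · have heqw : w i1 q = w i2 q := hw_off_bs i1 i2 q hqbs
          apply Finset.mem_image.mpr
          refine ⟨q, Finset.mem_filter.mpr ⟨Finset.mem_univ _, ?_⟩, ?_⟩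
          · rwa [← heqw]
          · rw [heqw]
      have hCFeq : CF j = CF j' := le_antisymm (hkey j j') (hkey j' j)
      obtain ⟨G, hGsub, hGcard⟩ := Finset.exists_subset_card_eq (min_le_right b (CF j).card)
      exact ⟨G, hGsub, hCFeq ▸ hGsub, hGcard, hCFeq ▸ hGcard⟩
  -- derive the contradiction
  have hs1 := sol (List.ofFn (w j) ++ suf t0) (hXlen j) k
    (by rw [hXlen j]; exact hkn) G
    (by rw [hXtake j, hXdrop j, hcands j]; exact hG1)
    (by rw [hXtake j, hXdrop j, hcands j]; exact hGc1)
  have hs2 := sol (List.ofFn (w j') ++ suf t0) (hXlen j') k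
    (by rw [hXlen j']; exact hkn) G
    (by rw [hXtake j', hXdrop j', hcands j']; exact hG2)
    (by rw [hXtake j', hXdrop j', hcands j']; exact hGc2)
  rw [hXtake j, hXdrop j, hfeq] at hs1
  rw [hXtake j', hXdrop j'] at hs2
  have hcontra := hs1.symm.trans hs2
  rw [hFj, hFj'] at hcontra
  exact absurd hcontra (by norm_num)

/-- **Median and Mode are BAPO-hard.** Fix `ε ∈ (0,1)` and functions `a, b : ℕ → ℕ`
with `a(n) = o(log n)` and `b(n) = O(n^{1-ε})`. Let `Med` (resp. `Mode`) be any
median (resp. mode) function on integer sequences; in particular, on `{0,1}`-valued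
inputs the median and the mode equal `1` exactly when the input has a strict
majority of ones (and equal `0` otherwise). Then for all sufficiently large `n`,
there is no `(a(n), b(n))`-BAPO solving `Median` on all inputs of length `n`,
and no `(a(n), b(n))`-BAPO solving `Mode` on all inputs of length `n`. -/
theorem median_and_mode_hard (ε : ℝ) (hε0 : 0 < ε) (hε1 : ε < 1) (a b : ℕ → ℕ)
    (ha : (fun n : ℕ => (a n : ℝ)) =o[atTop] fun n : ℕ => Real.log n)
    (hb : (fun n : ℕ => (b n : ℝ)) =O[atTop] fun n : ℕ => (n : ℝ) ^ (1 - ε))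
    (Med Mode : List ℤ → ℤ)
    (hMed : ∀ x : List ℤ, (∀ t ∈ x, t = 0 ∨ t = 1) →
      Med x = if x.count 0 < x.count 1 then 1 else 0)
    (hMode : ∀ x : List ℤ, (∀ t ∈ x, t = 0 ∨ t = 1) →
      Mode x = if x.count 0 < x.count 1 then 1 else 0) :
    ∀ᶠ n in atTop,
      (¬ ∃ M : BAPO ℤ ℤ (a n) (b n),
        ∀ x : List ℤ, x.length = n → M.SolvesOn x (Med x)) ∧
      (¬ ∃ M : BAPO ℤ ℤ (a n) (b n),
        ∀ x : List ℤ, x.length = n → M.SolvesOn x (Mode x)) := by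
  have hev : ∀ᶠ n in atTop, 100 * 2^(a n) * 2^(a n) * (b n + 1) ≤ n := by
    obtain ⟨c, hc0, hcB⟩ := hb.exists_pos
    have hcb : ∀ᶠ n : ℕ in atTop, (b n : ℝ) ≤ c * (n:ℝ)^(1-ε) := by
      filter_upwards [hcB.bound, eventually_ge_atTop 1] with n h1 h2
      have hn0 : (0:ℝ) ≤ (n:ℝ) := by positivity
      calc (b n : ℝ) ≤ ‖(b n : ℝ)‖ := le_abs_self _
        _ ≤ c * ‖(n:ℝ)^(1-ε)‖ := h1
        _ = c * (n:ℝ)^(1-ε) := by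
            rw [Real.norm_eq_abs, abs_of_nonneg (Real.rpow_nonneg hn0 _)]
    have hab : ∀ᶠ n : ℕ in atTop, (a n : ℝ) * Real.log 2 ≤ (ε/4) * Real.log n := by
      have h8 : (0:ℝ) < ε/8 := by positivity
      filter_upwards [ha.def h8, eventually_ge_atTop 1] with n h1 h2
      have hn1 : (1:ℝ) ≤ (n:ℝ) := by exact_mod_cast h2
      have hlog : 0 ≤ Real.log n := Real.log_nonneg hn1
      have h1' : (a n : ℝ) ≤ ε/8 * Real.log n := by
        rw [Real.norm_natCast, Real.norm_eq_abs, abs_of_nonneg hlog] at h1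
        exact h1
      have hlog2 : Real.log 2 ≤ 1 := by
        have := Real.log_two_lt_d9
        linarith
      have hlog2' : 0 ≤ Real.log 2 := Real.log_nonneg (by norm_num)
      have han : (0:ℝ) ≤ (a n : ℝ) := by positivity
      nlinarith [mul_le_mul_of_nonneg_right h1' hlog2']
    have hpow : Tendsto (fun n : ℕ => (n:ℝ)^(ε/2)) atTop atTop :=
      (tendsto_rpow_atTop (by positivity)).comp tendsto_natCast_atTop_atTop
    filter_upwards [hcb, hab, hpow.eventually_ge_atTop (100*(c+1)), eventually_ge_atTop 1]
      with n h1 h2 h3 h4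
    have hn1 : (1:ℝ) ≤ n := by exact_mod_cast h4
    have hn0 : (0:ℝ) < n := by linarith
    have h2pow : (2:ℝ)^(a n) ≤ (n:ℝ)^(ε/4) := by
      have e1 : (2:ℝ)^(a n) = Real.exp ((a n) * Real.log 2) := by
        rw [Real.exp_nat_mul, Real.exp_log (by norm_num : (0:ℝ) < 2)]
      have e2 : (n:ℝ)^(ε/4) = Real.exp ((ε/4) * Real.log n) := by
        rw [Real.rpow_def_of_pos hn0, mul_comm]
      rw [e1, e2]
      exact Real.exp_le_exp.mpr (by linarith)
    have key : (100:ℝ) * 2^(a n) * 2^(a n) * ((b n:ℝ) + 1) ≤ n := by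
      have hr1 : (1:ℝ) ≤ (n:ℝ)^(1-ε) := Real.one_le_rpow hn1 (by linarith)
      have hb1 : (b n : ℝ) + 1 ≤ (c+1) * (n:ℝ)^(1-ε) := by nlinarith
      have hr2 : (n:ℝ)^(ε/4) * (n:ℝ)^(ε/4) = (n:ℝ)^(ε/2) := by
        rw [← Real.rpow_add hn0]; ring_nf
      have hr3 : (n:ℝ)^(ε/2) * (n:ℝ)^(1-ε) = (n:ℝ)^(1-ε/2) := by
        rw [← Real.rpow_add hn0]; ring_nf
      have hr4 : (n:ℝ)^(ε/2) * (n:ℝ)^(1-ε/2) = (n:ℝ) := by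
        rw [← Real.rpow_add hn0]
        norm_num
      have e0 : (100:ℝ) * 2^(a n) * 2^(a n) * ((b n:ℝ)+1)
          = 100 * (2^(a n) * 2^(a n)) * ((b n:ℝ)+1) := by ring
      calc (100:ℝ) * 2^(a n) * 2^(a n) * ((b n:ℝ)+1)
          ≤ 100 * ((n:ℝ)^(ε/4) * (n:ℝ)^(ε/4)) * ((c+1) * (n:ℝ)^(1-ε)) := by
            rw [e0]
            gcongr <;> positivity
        _ = 100 * (c+1) * ((n:ℝ)^(ε/2) * (n:ℝ)^(1-ε)) := by rw [hr2]; ring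
        _ = 100 * (c+1) * (n:ℝ)^(1-ε/2) := by rw [hr3]
        _ ≤ (n:ℝ)^(ε/2) * (n:ℝ)^(1-ε/2) :=
            mul_le_mul_of_nonneg_right h3 (Real.rpow_nonneg (le_of_lt hn0) _)
        _ = (n:ℝ) := hr4
    exact_mod_cast key
  filter_upwards [hev] with n hn
  exact ⟨bapo_maj_core (a n) (b n) n hn Med hMed, bapo_maj_core (a n) (b n) n hn Mode hMode⟩
end
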